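/- If a finitely supported real sequence (U^t_i) evolves under the udKdV update rule, then the new state is given by U^{t+1}_i = R(a)_i − U^t_i, where a is the sequence a_i = U^t_{i−1} + U^t_i and R is the cell-transfer operator. -/

import Mathlib

/-- The cell-transfer operator `R_j`. -/
noncomputable def Rj (j : ℤ) (a : ℤ → ℝ) : ℤ → ℝ := fun i =>
  if i = j then min 1 (a j)
  else if i = j + 1 then a (j + 1) + a j - min 1 (a j)
  else a i

/-- The composition `R_n ∘ ⋯ ∘ R_{m+1} ∘ R_m` of the transfer operators,
applied in increasing order of the index. -/
noncomputable def Rcomp (m n : ℤ) (a : ℤ → ℝ) : ℤ → ℝ :=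
  ((Finset.Icc m n).sort (· ≤ ·)).foldl (fun s j => Rj j s) a

lemma sort_Icc_succ (m i : ℤ) (h : m ≤ i + 1) :
    ((Finset.Icc m (i+1)).sort (· ≤ ·)) = ((Finset.Icc m i).sort (· ≤ ·)) ++ [i+1] := by
  have hins : Finset.Icc m (i+1) = insert (i+1) (Finset.Icc m i) := by
    ext x; simp [Finset.mem_Icc, Finset.mem_insert]; omega
  have hnm : (i+1) ∉ Finset.Icc m i := by
    simp only [Finset.mem_Icc, not_and, not_le]; omega
  apply fun (hp : List.Perm _ _) (h1 : List.Pairwise (fun x y : ℤ => x ≤ y) _)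
    (h2 : List.Pairwise (fun x y : ℤ => x ≤ y) _) => List.Perm.eq_of_pairwise' h1 h2 hp
  · refine ((Finset.sort_perm_toList _ _).trans ?_).trans
      ((List.perm_append_singleton _ _).symm)
    rw [hins]
    exact (Finset.toList_insert hnm).trans
      (List.Perm.cons _ (Finset.sort_perm_toList _ _).symm)
  · exact Finset.pairwise_sort _ _
  · refine List.pairwise_append.2 ⟨Finset.pairwise_sort _ _, List.pairwise_singleton _ _, ?_⟩
    intro x hx y hy
    simp only [List.mem_singleton] at hy
    subst hy
    have := (Finset.mem_sort (α := ℤ) (· ≤ ·)).1 hx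
    simp [Finset.mem_Icc] at this; omega

lemma Rcomp_of_lt (m i : ℤ) (h : i < m) (a : ℤ → ℝ) : Rcomp m i a = a := by
  unfold Rcomp
  rw [Finset.Icc_eq_empty (by omega), Finset.sort_empty]
  rfl

lemma Rcomp_succ (m i : ℤ) (h : m ≤ i + 1) (a : ℤ → ℝ) :
    Rcomp m (i+1) a = Rj (i+1) (Rcomp m i a) := by
  unfold Rcomp
  rw [sort_Icc_succ m i h, List.foldl_append]
  rfl

lemma Rcomp_self (m : ℤ) (a : ℤ → ℝ) : Rcomp m m a = Rj m a := by
  have e := Rcomp_succ m (m-1) (by omega) a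
  rw [Rcomp_of_lt m (m-1) (by omega)] at e
  simpa [show m - 1 + 1 = m from by omega] using e

lemma sumIio_eq (f : ℤ → ℝ) (T : Finset ℤ) (hT : ∀ j ∉ T, f j = 0) (i : ℤ) :
    (∑ᶠ j ∈ Set.Iio i, f j) = ∑ j ∈ T, if j < i then f j else 0 := by
  have h : (∑ᶠ j ∈ Set.Iio i, f j) = ∑ j ∈ T.filter (· < i), f j := by
    apply finsum_mem_eq_sum_of_inter_support_eq
    ext j
    simp only [Set.mem_inter_iff, Set.mem_Iio, Function.mem_support, Finset.coe_filter,
      Set.mem_setOf_eq, Finset.mem_coe, Finset.mem_filter]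
    constructor
    · rintro ⟨hj, hfj⟩
      refine ⟨⟨?_, hj⟩, hfj⟩
      by_contra hnot
      exact hfj (hT j hnot)
    · rintro ⟨⟨_, hj⟩, hfj⟩; exact ⟨hj, hfj⟩
  rw [h, Finset.sum_filter]

lemma sumIio_succ (f : ℤ → ℝ) (T : Finset ℤ) (hT : ∀ j ∉ T, f j = 0) (i : ℤ) :
    (∑ᶠ j ∈ Set.Iio (i+1), f j) = (∑ᶠ j ∈ Set.Iio i, f j) + f i := by
  rw [sumIio_eq f T hT, sumIio_eq f T hT]
  have step : ∀ j ∈ T, (if j < i+1 then f j else 0)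
      = (if j < i then f j else 0) + (if j = i then f j else 0) := by
    intro j _
    by_cases h1 : j < i
    · simp [h1, show j < i + 1 from by omega, show j ≠ i from by omega]
    · by_cases h2 : j = i
      · simp [h2, show (i:ℤ) < i + 1 from by omega, lt_irrefl]
      · simp [h1, h2, show ¬ (j < i + 1) from by omega]
  rw [Finset.sum_congr rfl step, Finset.sum_add_distrib, Finset.sum_ite_eq' T i f]
  by_cases hi : i ∈ T
  · simp [hi]
  · simp [hi, hT i hi]

lemma sumIio_zero (f : ℤ → ℝ) (i : ℤ) (hz : ∀ j < i, f j = 0) :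
    (∑ᶠ j ∈ Set.Iio i, f j) = 0 :=
  finsum_mem_of_eqOn_zero fun j hj => hz j hj

/-- If a finitely supported real state `U^t` evolves under the
udKdV update rule, then `U^{t+1}_i = R(a)_i − U^t_i` where `a_i = U^t_{i−1} + U^t_i`
and `R` is the cell-transfer operator (whose value at `i` is `Rcomp m i a i` for
`m` below the support). -/
theorem stmt_3 (U : ℤ → ℤ → ℝ)
    (hfin : ∀ t, (Function.support (U t)).Finite)
    (hup : ∀ t i, U (t + 1) i =
      min (1 - U t i) (∑ᶠ j ∈ Set.Iio i, (U t j - U (t + 1) j)))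
    (t m : ℤ) (hm : ∀ j < m, U t j = 0) :
    ∀ i : ℤ, U (t + 1) i =
      Rcomp m i (fun k => U t (k - 1) + U t k) i - U t i := by
  set a : ℤ → ℝ := fun k => U t (k - 1) + U t k with ha
  set f : ℤ → ℝ := fun j => U t j - U (t + 1) j with hfdef
  have hupf : ∀ i, U (t + 1) i = min (1 - U t i) (∑ᶠ j ∈ Set.Iio i, f j) :=
    fun i => hup t i
  set T : Finset ℤ := ((hfin t).union (hfin (t + 1))).toFinset with hTdef
  have hT : ∀ j ∉ T, f j = 0 := by
    intro j hj
    rw [hTdef, Set.Finite.mem_toFinset, Set.mem_union] at hj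
    push_neg at hj
    simp only [Function.mem_support, not_not] at hj
    simp [hfdef, hj.1, hj.2]
  have hS1 := sumIio_succ f T hT
  obtain ⟨b, hb⟩ : ∃ b : ℤ, ∀ x, U t x ≠ 0 ∨ U (t+1) x ≠ 0 → b ≤ x := by
    obtain ⟨b, hb⟩ := ((hfin t).union (hfin (t + 1))).bddBelow
    exact ⟨b, fun x hx => hb (by
      rcases hx with h | h
      · exact Or.inl h
      · exact Or.inr h)⟩
  set N : ℤ := min b m with hNdef
  have hN0 : ∀ k < N, U t k = 0 ∧ U (t+1) k = 0 := by
    intro k hk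
    constructor
    · by_contra h; have := hb k (Or.inl h); omega
    · by_contra h; have := hb k (Or.inr h); omega
  have hA : ∀ n : ℕ, N + (n:ℤ) ≤ m →
      (∑ᶠ j ∈ Set.Iio (N + (n:ℤ)), f j) = 0 ∧
      (N + (n:ℤ) < m → U (t+1) (N + (n:ℤ)) = 0) := by
    intro n
    induction n with
    | zero =>
      intro _
      have hS : (∑ᶠ j ∈ Set.Iio (N + ((0:ℕ):ℤ)), f j) = 0 := by
        apply sumIio_zero
        intro j hj
        obtain ⟨h1, h2⟩ := hN0 j (by push_cast at hj ⊢; omega)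
        simp [hfdef, h1, h2]
      refine ⟨hS, fun hlt => ?_⟩
      rw [hupf, hS, hm _ hlt]
      norm_num
    | succ n ih =>
      intro hle
      have hle' : N + (n:ℤ) ≤ m := by push_cast at hle; omega
      obtain ⟨ihS, ihW⟩ := ih hle'
      have hWn : U (t+1) (N + (n:ℤ)) = 0 := ihW (by push_cast at hle; omega)
      have hVn : U t (N + (n:ℤ)) = 0 := hm _ (by push_cast at hle; omega)
      have hS : (∑ᶠ j ∈ Set.Iio (N + (((n:ℕ)+1:ℕ):ℤ)), f j) = 0 := by
        rw [show (N + (((n:ℕ)+1:ℕ):ℤ)) = (N + (n:ℤ)) + 1 from by push_cast; ring,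
          hS1, ihS]
        simp [hfdef, hWn, hVn]
      refine ⟨hS, fun hlt => ?_⟩
      rw [hupf, hS, hm _ hlt]
      norm_num
  have hW0 : ∀ j < m, U (t+1) j = 0 := by
    intro j hj
    rcases lt_or_ge j N with h | h
    · exact (hN0 j h).2
    · have := (hA (j - N).toNat (by omega)).2
      rw [show N + ((j - N).toNat : ℤ) = j from by omega] at this
      exact this hj
  have hSm : (∑ᶠ j ∈ Set.Iio m, f j) = 0 := by
    have := (hA (m - N).toNat (by omega)).1
    rwa [show N + ((m - N).toNat : ℤ) = m from by omega] at this
  have hkey : ∀ i : ℤ, U (t+1) i + U t i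
      = min 1 (U t i + (∑ᶠ j ∈ Set.Iio i, f j)) := by
    intro i
    rw [hupf i, ← min_add_add_right]
    congr 1 <;> ring
  have hMain : ∀ n : ℕ,
      (U (t+1) (m + (n:ℤ)) = Rcomp m (m + (n:ℤ)) a (m + (n:ℤ)) - U t (m + (n:ℤ))) ∧
      (Rcomp m (m + (n:ℤ)) a (m + (n:ℤ) + 1)
        = a (m + (n:ℤ) + 1) + (∑ᶠ j ∈ Set.Iio (m + (n:ℤ) + 1), f j) - U t (m + (n:ℤ))) ∧
      (∀ k, m + (n:ℤ) + 1 < k → Rcomp m (m + (n:ℤ)) a k = a k) := by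
    intro n
    induction n with
    | zero =>
      push_cast
      simp only [add_zero]
      have hRmm := Rcomp_self m a
      have ham : a m = U t m := by
        simp only [ha]; rw [hm (m-1) (by omega)]; ring
      have hRjm : Rj m a m = min 1 (U t m) := by simp [Rj, ham]
      have hmin0 : min 1 (U t m) - U t m = min (1 - U t m) 0 := by
        rw [← (min_sub_sub_right 1 (U t m) (U t m))]
        simp
      have h1 : U (t + 1) m = Rcomp m m a m - U t m := by
        rw [hRmm, hRjm, hupf m, hSm]
        exact hmin0.symm
      have hwm : U (t + 1) m = min 1 (U t m) - U t m := by
        rw [h1, hRmm, hRjm]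
      refine ⟨h1, ?_, ?_⟩
      · have hRj1 : Rcomp m m a (m+1) = a (m+1) + a m - min 1 (a m) := by
          rw [hRmm]
          simp [Rj, show m + 1 ≠ m from by omega]
        rw [hRj1, hS1 m, hSm, ham,
          show f m = U t m - U (t + 1) m from rfl]
        linarith [hwm]
      · intro k hk
        rw [hRmm]
        simp [Rj, show k ≠ m from by omega, show k ≠ m + 1 from by omega]
    | succ n ih =>
      obtain ⟨ih1, ih2, ih3⟩ := ih
      push_cast
      rw [show m + ((n:ℤ)+1) = (m + (n:ℤ)) + 1 from by ring]
      set p : ℤ := m + (n:ℤ) with hp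
      have hRc : Rcomp m (p + 1) a = Rj (p+1) (Rcomp m p a) :=
        Rcomp_succ m p (by omega) a
      have haP : a (p+1) = U t p + U t (p+1) := by
        simp only [ha]
        rw [show p + 1 - 1 = p from by ring]
      have hcp : Rcomp m p a (p+1) = U t (p+1) + (∑ᶠ j ∈ Set.Iio (p+1), f j) := by
        rw [ih2, haP]; ring
      have hc1 : Rcomp m (p+1) a (p+1) = min 1 (Rcomp m p a (p+1)) := by
        rw [hRc]; simp [Rj]
      have h1 : U (t + 1) (p+1) = Rcomp m (p+1) a (p+1) - U t (p+1) := by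
        rw [hc1, hcp]
        linarith [hkey (p+1)]
      have hmin : min 1 (Rcomp m p a (p+1)) = U (t+1) (p+1) + U t (p+1) := by
        rw [hcp]; exact (hkey (p+1)).symm
      refine ⟨h1, ?_, ?_⟩
      · have hc2 : Rcomp m (p+1) a (p+1+1)
            = Rcomp m p a (p+1+1) + Rcomp m p a (p+1) - min 1 (Rcomp m p a (p+1)) := by
          rw [hRc]
          simp [Rj, show p+1+1 ≠ p+1 from by omega]
        rw [hc2, ih3 (p+1+1) (by omega), hmin, hS1 (p+1), hcp,
          show f (p+1) = U t (p+1) - U (t + 1) (p+1) from rfl]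
        ring
      · intro k hk
        rw [hRc]
        have h3 := ih3 k (by omega)
        simp [Rj, show k ≠ p + 1 from by omega, show k ≠ p + 1 + 1 from by omega, h3]
  intro i
  rcases lt_or_ge i m with h | h
  · rw [Rcomp_of_lt m i h, hW0 i h]
    simp only [ha]
    rw [hm (i-1) (by omega)]
    ring
  · have := (hMain (i - m).toNat).1
    rwa [show m + (((i - m).toNat : ℕ) : ℤ) = i from by omega] at this
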